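/- Let d, k be integers with 2 ≤ k ≤ d−2, and let X be a finite set of k-dimensional linear subspaces of ℝ^d that is a Grassmann 4-design. For V ∈ X define R_V := √(d/(k(d−k)))·(P_V − (k/d)I_d) and set D_0 := d(d+1)/2 − 1. Then ∑_{V,W∈X} tr(R_V R_W) = 0 and ∑_{V,W∈X} (tr(R_V R_W))^2 = |X|^2 / D_0; that is, the image of X under V ↦ R_V is a spherical 2-design on the unit sphere of the space of traceless symmetric d×d matrices with the Frobenius inner product. -/

import Mathlib

open scoped BigOperators

/-- Orthogonal projection onto a subspace `V` of `ℝ^d`, as a linear endomorphism. -/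
noncomputable def proj {d : ℕ} (V : Submodule ℝ (EuclideanSpace ℝ (Fin d))) :
    EuclideanSpace ℝ (Fin d) →ₗ[ℝ] EuclideanSpace ℝ (Fin d) :=
  V.subtype ∘ₗ (Submodule.orthogonalProjectionOnto V).toLinearMap

/-- `tr(P_V P_W)`. -/
noncomputable def trP {d : ℕ} (V W : Submodule ℝ (EuclideanSpace ℝ (Fin d))) : ℝ :=
  LinearMap.trace ℝ (EuclideanSpace ℝ (Fin d)) (proj V ∘ₗ proj W)

/-- `tr((P_V P_W)²)`. -/
noncomputable def trP2 {d : ℕ} (V W : Submodule ℝ (EuclideanSpace ℝ (Fin d))) : ℝ :=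
  LinearMap.trace ℝ (EuclideanSpace ℝ (Fin d)) ((proj V ∘ₗ proj W) ∘ₗ (proj V ∘ₗ proj W))

/-- Zonal polynomial `P_{(2)}` as a function of `t₁ = tr(P_V P_W)`. -/
noncomputable def P2 (d k : ℕ) (t1 : ℝ) : ℝ :=
  ((k : ℝ) - (d : ℝ) * (t1 / k)) / ((k : ℝ) - d)

/-- `c₄ = (3/(k(k+2)))·(t₂ + (1/3)(t₁² − t₂))`. -/
noncomputable def c4 (k : ℕ) (t1 t2 : ℝ) : ℝ :=
  (3 / ((k : ℝ) * ((k : ℝ) + 2))) * (t2 + (1 / 3) * (t1 ^ 2 - t2))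

/-- `c₂₂ = (1/(k(k−1)))·(t₁² − t₂)`. -/
noncomputable def c22 (k : ℕ) (t1 t2 : ℝ) : ℝ :=
  (1 / ((k : ℝ) * ((k : ℝ) - 1))) * (t1 ^ 2 - t2)

/-- Unnormalized zonal polynomial `P'_{(4)}`. -/
noncomputable def P4' (d k : ℕ) (t1 t2 : ℝ) : ℝ :=
  1 - (2 * ((d : ℝ) + 2) / k) * (t1 / k) +
    (((d : ℝ) + 2) * ((d : ℝ) + 4) / ((k : ℝ) * ((k : ℝ) + 2))) * c4 k t1 t2

/-- Unnormalized zonal polynomial `P'_{(2,2)}`. -/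
noncomputable def P22' (d k : ℕ) (t1 t2 : ℝ) : ℝ :=
  1 - (2 * ((d : ℝ) - 1) / k) * (t1 / k) +
    (((d : ℝ) - 1) * ((d : ℝ) - 2) / ((k : ℝ) * ((k : ℝ) - 1))) * c22 k t1 t2

/-- The Conway–Hardin–Sloane embedding `R_V = √(d/(k(d−k)))·(P_V − (k/d)·Id)`. -/
noncomputable def Rmap (d k : ℕ) (V : Submodule ℝ (EuclideanSpace ℝ (Fin d))) :
    EuclideanSpace ℝ (Fin d) →ₗ[ℝ] EuclideanSpace ℝ (Fin d) :=
  Real.sqrt ((d : ℝ) / ((k : ℝ) * ((d : ℝ) - k))) •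
    (proj V - ((k : ℝ) / (d : ℝ)) • LinearMap.id)

lemma trace_proj {d : ℕ} (V : Submodule ℝ (EuclideanSpace ℝ (Fin d))) :
    LinearMap.trace ℝ (EuclideanSpace ℝ (Fin d)) (proj V) = (Module.finrank ℝ V : ℝ) := by
  have h : LinearMap.IsProj V (proj V) := by
    constructor
    · intro x; exact (Submodule.orthogonalProjectionOnto V x).2
    · intro x hx; exact Submodule.starProjection_eq_self_iff.2 hx
  exact h.trace

lemma trace_R {d k : ℕ} (hs : 0 ≤ (d : ℝ) / ((k : ℝ) * ((d : ℝ) - k))) (hd : (d:ℝ) ≠ 0)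
    (V W : Submodule ℝ (EuclideanSpace ℝ (Fin d)))
    (hV : Module.finrank ℝ V = k) (hW : Module.finrank ℝ W = k) :
    LinearMap.trace ℝ (EuclideanSpace ℝ (Fin d)) (Rmap d k V ∘ₗ Rmap d k W)
      = ((d : ℝ) / ((k : ℝ) * ((d : ℝ) - k))) * (trP V W - (k:ℝ)^2 / d) := by
  have hdim : (Module.finrank ℝ (EuclideanSpace ℝ (Fin d)) : ℝ) = d := by
    simp [finrank_euclideanSpace]
  have h2 : Real.sqrt ((d : ℝ) / ((k : ℝ) * ((d : ℝ) - k))) ^ 2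
      = (d : ℝ) / ((k : ℝ) * ((d : ℝ) - k)) := Real.sq_sqrt hs
  simp only [Rmap, LinearMap.smul_comp, LinearMap.comp_smul, smul_smul,
    LinearMap.sub_comp, LinearMap.comp_sub, LinearMap.smul_comp, LinearMap.comp_smul,
    LinearMap.comp_id, LinearMap.id_comp, map_smul, map_sub, smul_eq_mul,
    LinearMap.trace_id, trace_proj, hV, hW, hdim, trP]
  set s := Real.sqrt ((d : ℝ) / ((k : ℝ) * ((d : ℝ) - k))) with hsdef
  rw [← h2]
  field_simp
  ring

lemma sum_expand {α : Type*} (X : Finset α) (a b c e : ℝ) (f g h F : α → α → ℝ)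
    (hF : ∀ V ∈ X, ∀ W ∈ X, F V W = a + b * f V W + c * g V W + e * h V W) :
    ∑ V ∈ X, ∑ W ∈ X, F V W
      = (X.card : ℝ)^2 * a + b * (∑ V ∈ X, ∑ W ∈ X, f V W)
        + c * (∑ V ∈ X, ∑ W ∈ X, g V W) + e * (∑ V ∈ X, ∑ W ∈ X, h V W) := by
  rw [Finset.sum_congr rfl fun V hV => Finset.sum_congr rfl (hF V hV)]
  simp only [Finset.sum_add_distrib, ← Finset.mul_sum, Finset.sum_const, nsmul_eq_mul]
  ring

set_option maxHeartbeats 2000000 in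
/-- Lemma: a Grassmann 4-design `X ⊆ G_{k,d}` (characterized by the
vanishing of the sums of the zonal polynomials `P_{(2)}`, `P'_{(4)}`, `P'_{(2,2)}`)
is mapped by `V ↦ R_V` to a spherical 2-design:
`∑_{V,W∈X} tr(R_V R_W) = 0` and `∑_{V,W∈X} tr(R_V R_W)² = |X|²/D₀`,
where `D₀ = d(d+1)/2 − 1`. -/
theorem stmt14 (d k : ℕ) (hk : 2 ≤ k) (hkd : k ≤ d - 2) (hd : 4 ≤ d)
    (X : Finset (Submodule ℝ (EuclideanSpace ℝ (Fin d))))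
    (hdim : ∀ V ∈ X, Module.finrank ℝ V = k)
    (hdes2 : ∑ V ∈ X, ∑ W ∈ X, P2 d k (trP V W) = 0)
    (hdes4 : ∑ V ∈ X, ∑ W ∈ X, P4' d k (trP V W) (trP2 V W) = 0)
    (hdes22 : ∑ V ∈ X, ∑ W ∈ X, P22' d k (trP V W) (trP2 V W) = 0) :
    (∑ V ∈ X, ∑ W ∈ X,
        LinearMap.trace ℝ (EuclideanSpace ℝ (Fin d)) (Rmap d k V ∘ₗ Rmap d k W)) = 0 ∧
    (∑ V ∈ X, ∑ W ∈ X,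
        (LinearMap.trace ℝ (EuclideanSpace ℝ (Fin d)) (Rmap d k V ∘ₗ Rmap d k W)) ^ 2) =
      (X.card : ℝ) ^ 2 / ((d : ℝ) * ((d : ℝ) + 1) / 2 - 1) := by
  -- numeric facts
  have hkd2 : k + 2 ≤ d := by omega
  have hkR : (2:ℝ) ≤ (k:ℝ) := by exact_mod_cast hk
  have hdkR : (k:ℝ) + 2 ≤ (d:ℝ) := by exact_mod_cast hkd2
  have hdR : (4:ℝ) ≤ (d:ℝ) := by exact_mod_cast hd
  have hk0 : (k:ℝ) ≠ 0 := by linarith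
  have hkm1 : (k:ℝ) - 1 ≠ 0 := by intro h; nlinarith
  have hkp2 : (k:ℝ) + 2 ≠ 0 := by linarith
  have hd0 : (d:ℝ) ≠ 0 := by linarith
  have hdm1 : (d:ℝ) - 1 ≠ 0 := by intro h; nlinarith
  have hdm2 : (d:ℝ) - 2 ≠ 0 := by intro h; nlinarith
  have hdp2 : (d:ℝ) + 2 ≠ 0 := by linarith
  have hdp4 : (d:ℝ) + 4 ≠ 0 := by linarith
  have hkmd : (k:ℝ) - (d:ℝ) ≠ 0 := by intro h; nlinarith
  have hdmkpos : (0:ℝ) < (d:ℝ) - (k:ℝ) := by linarith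
  have hdmk : (d:ℝ) - (k:ℝ) ≠ 0 := ne_of_gt hdmkpos
  have hD0 : (d:ℝ) * ((d:ℝ) + 1) / 2 - 1 ≠ 0 := by intro h; nlinarith
  have hs : 0 ≤ (d : ℝ) / ((k : ℝ) * ((d : ℝ) - k)) := by
    apply div_nonneg (by linarith)
    nlinarith
  -- expanded hypotheses
  have e1 := (sum_expand X ((k:ℝ)/((k:ℝ)-(d:ℝ))) (-((d:ℝ)/((k:ℝ)*((k:ℝ)-(d:ℝ))))) 0 0
      (fun V W => trP V W) (fun V W => trP V W) (fun V W => trP V W)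
      (fun V W => P2 d k (trP V W))
      (by intro V _ W _; simp only [P2]; field_simp; ring)).symm.trans hdes2
  have e2 := (sum_expand X 1 (-(2*((d:ℝ)+2)/(k:ℝ)^2))
      (((d:ℝ)+2)*((d:ℝ)+4)/((k:ℝ)^2*((k:ℝ)+2)^2))
      (2*(((d:ℝ)+2)*((d:ℝ)+4)/((k:ℝ)^2*((k:ℝ)+2)^2)))
      (fun V W => trP V W) (fun V W => (trP V W)^2) (fun V W => trP2 V W)
      (fun V W => P4' d k (trP V W) (trP2 V W))
      (by intro V _ W _; simp only [P4', c4]; field_simp; ring)).symm.trans hdes4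
  have e3 := (sum_expand X 1 (-(2*((d:ℝ)-1)/(k:ℝ)^2))
      (((d:ℝ)-1)*((d:ℝ)-2)/((k:ℝ)^2*((k:ℝ)-1)^2))
      (-(((d:ℝ)-1)*((d:ℝ)-2)/((k:ℝ)^2*((k:ℝ)-1)^2)))
      (fun V W => trP V W) (fun V W => (trP V W)^2) (fun V W => trP2 V W)
      (fun V W => P22' d k (trP V W) (trP2 V W))
      (by intro V _ W _; simp only [P22', c22]; field_simp; ring)).symm.trans hdes22
  set n := (X.card : ℝ) with hn
  set S1 := ∑ V ∈ X, ∑ W ∈ X, trP V W with hS1def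
  set S2 := ∑ V ∈ X, ∑ W ∈ X, trP2 V W with hS2def
  set Q := ∑ V ∈ X, ∑ W ∈ X, (trP V W)^2 with hQdef
  have hS1 : S1 = n^2 * (k:ℝ)^2 / (d:ℝ) := by
    linear_combination (norm := (field_simp; ring)) (-((k:ℝ)*((k:ℝ)-(d:ℝ)))/(d:ℝ)) * e1
  -- rewrite goals
  have g1 : (∑ V ∈ X, ∑ W ∈ X,
      LinearMap.trace ℝ (EuclideanSpace ℝ (Fin d)) (Rmap d k V ∘ₗ Rmap d k W))
      = n^2 * (-(((d:ℝ)/((k:ℝ)*((d:ℝ)-(k:ℝ)))) * (k:ℝ)^2/(d:ℝ)))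
        + ((d:ℝ)/((k:ℝ)*((d:ℝ)-(k:ℝ)))) * S1 + 0 * Q + 0 * S2 := by
    rw [hS1def, hQdef, hS2def]
    exact sum_expand X _ _ 0 0 (fun V W => trP V W) (fun V W => (trP V W)^2)
      (fun V W => trP2 V W) _
      (by intro V hV W hW; rw [trace_R hs hd0 V W (hdim V hV) (hdim W hW)]; ring)
  have g2 : (∑ V ∈ X, ∑ W ∈ X,
      (LinearMap.trace ℝ (EuclideanSpace ℝ (Fin d)) (Rmap d k V ∘ₗ Rmap d k W))^2)
      = n^2 * (((d:ℝ)/((k:ℝ)*((d:ℝ)-(k:ℝ))))^2 * (k:ℝ)^4/(d:ℝ)^2)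
        + (-(2*((d:ℝ)/((k:ℝ)*((d:ℝ)-(k:ℝ))))^2 * (k:ℝ)^2/(d:ℝ))) * S1
        + ((d:ℝ)/((k:ℝ)*((d:ℝ)-(k:ℝ))))^2 * Q + 0 * S2 := by
    rw [hS1def, hQdef, hS2def]
    exact sum_expand X _ _ _ 0 (fun V W => trP V W) (fun V W => (trP V W)^2)
      (fun V W => trP2 V W) _
      (by intro V hV W hW; rw [trace_R hs hd0 V W (hdim V hV) (hdim W hW)]; field_simp; ring)
  constructor
  · rw [g1]
    linear_combination (norm := (field_simp; ring)) ((d:ℝ)/((k:ℝ)*((d:ℝ)-(k:ℝ)))) * hS1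
  · rw [g2]
    have hA : Q + 2*S2 = n^2*(k:ℝ)^2*((k:ℝ)+2)^2/((d:ℝ)*((d:ℝ)+2)) := by
      linear_combination (norm := (field_simp; ring))
        ((k:ℝ)^2*((k:ℝ)+2)^2/(((d:ℝ)+2)*((d:ℝ)+4))) * e2
        + (2*((k:ℝ)+2)^2/((d:ℝ)+4)) * hS1
    have hB : Q - S2 = n^2*(k:ℝ)^2*((k:ℝ)-1)^2/((d:ℝ)*((d:ℝ)-1)) := by
      linear_combination (norm := (field_simp; ring))
        ((k:ℝ)^2*((k:ℝ)-1)^2/(((d:ℝ)-1)*((d:ℝ)-2))) * e3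
        + (2*((k:ℝ)-1)^2/((d:ℝ)-2)) * hS1
    have hQ : Q = (n^2*(k:ℝ)^2*((k:ℝ)+2)^2/((d:ℝ)*((d:ℝ)+2))
        + 2*(n^2*(k:ℝ)^2*((k:ℝ)-1)^2/((d:ℝ)*((d:ℝ)-1))))/3 := by linarith
    rw [show (d:ℝ)*((d:ℝ)+1)/2 - 1 = ((d:ℝ)+2)*((d:ℝ)-1)/2 by ring]
    linear_combination (norm := (field_simp; ring))
      ((d:ℝ)/((k:ℝ)*((d:ℝ)-(k:ℝ))))^2 * hQ
      + (-(2*((d:ℝ)/((k:ℝ)*((d:ℝ)-(k:ℝ))))^2 * (k:ℝ)^2/(d:ℝ))) * hS1
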